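/- arXiv:2605.10250 — 2 statements merged into one kernel-verified Lean document; each statement's English description precedes it below -/
import Mathlib

section
/- For all real q₁, q₂, q₃, q₄, each of the operators U₁(q₁), U₂(q₂), U₃(q₃), U₄(q₄) is a unitary operator on L²(ℝ², ℂ), and the following operator identities hold: U₁(q₁)∘U₃(q₃) = exp(i·q₃·q₁/ħ₀)·U₃(q₃)∘U₁(q₁); U₂(q₂)∘U₄(q₄) = exp(i·q₄·q₂/ħ₀)·U₄(q₄)∘U₂(q₂); U₁(q₁)∘U₂(q₂) = exp(−i·B₀·q₂·q₁/ħ₀)·U₂(q₂)∘U₁(q₁); U₃(q₃)∘U₄(q₄) = exp(−i·θ₀·q₄·q₃/ħ₀²)·U₄(q₄)∘U₃(q₃); U₁(q₁)∘U₄(q₄) = U₄(q₄)∘U₁(q₁); and U₂(q₂)∘U₃(q₃) = U₃(q₃)∘U₂(q₂). -/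
open MeasureTheory Complex
open scoped ENNReal

noncomputable section

/-- The pointwise action of `U₁(t)` on functions on `ℝ²`. -/
def U1act (hb th B r s t : ℝ) (f : ℝ × ℝ → ℂ) : ℝ × ℝ → ℂ := fun p =>
  Complex.exp (-Complex.I * B * (1 - r) * t * p.2 / (r * th * B - hb)) *
    f (p.1 + ((th * B * (r + s - r * s) - hb) / (r * th * B - hb)) * t, p.2)

/-- The pointwise action of `U₂(t)` on functions on `ℝ²`. -/
def U2act (hb th B r s t : ℝ) (f : ℝ × ℝ → ℂ) : ℝ × ℝ → ℂ := fun p =>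
  Complex.exp (-Complex.I * r * B * t * p.1 / hb) *
    f (p.1, p.2 - ((r * th * B * (1 - s) - hb) / hb) * t)

/-- The pointwise action of `U₃(t)` on functions on `ℝ²`. -/
def U3act (hb th B r s t : ℝ) (f : ℝ × ℝ → ℂ) : ℝ × ℝ → ℂ := fun p =>
  Complex.exp (Complex.I * t * p.1 / hb) * f (p.1, p.2 - s * (th / hb) * t)

/-- The pointwise action of `U₄(t)` on functions on `ℝ²`. -/
def U4act (hb th B r s t : ℝ) (f : ℝ × ℝ → ℂ) : ℝ × ℝ → ℂ := fun p =>
  Complex.exp (Complex.I * t * p.2 / hb) * f (p.1 + (1 - s) * (th / hb) * t, p.2)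

/-- A pointwise-defined map on functions "is a unitary operator on `L²(ℝ², ℂ)`":
there is a unitary (linear isometric bijection) of `L²` whose action agrees a.e. with it. -/
def IsUnitaryOnL2 (Uact : (ℝ × ℝ → ℂ) → (ℝ × ℝ → ℂ)) : Prop :=
  ∃ V : Lp ℂ 2 (volume : Measure (ℝ × ℝ)) ≃ₗᵢ[ℂ] Lp ℂ 2 (volume : Measure (ℝ × ℝ)),
    ∀ f : Lp ℂ 2 (volume : Measure (ℝ × ℝ)), (V f : ℝ × ℝ → ℂ) =ᵐ[volume] Uact ⇑f

variable {c : ℝ × ℝ → ℂ} {T : (ℝ × ℝ) ≃ᵐ (ℝ × ℝ)}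

def pcFun (c : ℝ × ℝ → ℂ) (T : (ℝ × ℝ) ≃ᵐ (ℝ × ℝ)) (f : ℝ × ℝ → ℂ) : ℝ × ℝ → ℂ :=
  fun p => c p * f (T p)

lemma pc_memLp (hc : Measurable c) (hc1 : ∀ p, ‖c p‖ = 1)
    (hT : MeasurePreserving T volume volume) (f : Lp ℂ 2 (volume : Measure (ℝ × ℝ))) :
    MemLp (pcFun c T ⇑f) 2 volume := by
  have hfm : AEStronglyMeasurable (⇑f ∘ T) volume :=
    (Lp.aestronglyMeasurable f).comp_quasiMeasurePreserving hT.quasiMeasurePreserving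
  have hm : AEStronglyMeasurable (pcFun c T ⇑f) volume := hc.aestronglyMeasurable.mul hfm
  refine ⟨hm, ?_⟩
  have h1 : eLpNorm (pcFun c T ⇑f) 2 volume = eLpNorm (⇑f ∘ T) 2 volume := by
    apply eLpNorm_congr_norm_ae
    filter_upwards with p
    simp [pcFun, Function.comp, hc1 p]
  rw [h1, eLpNorm_comp_measurePreserving (Lp.aestronglyMeasurable f) hT]
  exact Lp.eLpNorm_lt_top f

lemma pc_eLpNorm (hc1 : ∀ p, ‖c p‖ = 1) (hT : MeasurePreserving T volume volume)
    (f : Lp ℂ 2 (volume : Measure (ℝ × ℝ))) :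
    eLpNorm (pcFun c T ⇑f) 2 volume = eLpNorm (⇑f) 2 volume := by
  have h1 : eLpNorm (pcFun c T ⇑f) 2 volume = eLpNorm (⇑f ∘ T) 2 volume := by
    apply eLpNorm_congr_norm_ae
    filter_upwards with p
    simp [pcFun, Function.comp, hc1 p]
  rw [h1, eLpNorm_comp_measurePreserving (Lp.aestronglyMeasurable f) hT]

def pcL (hc : Measurable c) (hc1 : ∀ p, ‖c p‖ = 1)
    (hT : MeasurePreserving T volume volume) :
    Lp ℂ 2 (volume : Measure (ℝ × ℝ)) →ₗᵢ[ℂ] Lp ℂ 2 (volume : Measure (ℝ × ℝ)) where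
  toFun f := (pc_memLp hc hc1 hT f).toLp _
  map_add' f g := by
    rw [← MemLp.toLp_add (pc_memLp hc hc1 hT f) (pc_memLp hc hc1 hT g)]
    apply MemLp.toLp_congr
    filter_upwards [hT.quasiMeasurePreserving.ae_eq_comp (Lp.coeFn_add f g)] with p hp
    simp only [pcFun, Function.comp] at hp ⊢
    rw [hp]; simp [pcFun, Pi.add_apply, mul_add]
  map_smul' a f := by
    simp only [RingHom.id_apply]
    rw [← MemLp.toLp_const_smul a (pc_memLp hc hc1 hT f)]
    apply MemLp.toLp_congr
    filter_upwards [hT.quasiMeasurePreserving.ae_eq_comp (Lp.coeFn_smul a f)] with p hp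
    simp only [pcFun, Function.comp] at hp ⊢
    rw [hp]; simp [pcFun]; ring
  norm_map' f := by
    exact (Lp.norm_toLp _ (pc_memLp hc hc1 hT f)).trans (by rw [pc_eLpNorm hc1 hT, Lp.norm_def])

lemma pcL_coe (hc : Measurable c) (hc1 : ∀ p, ‖c p‖ = 1)
    (hT : MeasurePreserving T volume volume) (f : Lp ℂ 2 (volume : Measure (ℝ × ℝ))) :
    ⇑(pcL hc hc1 hT f) =ᵐ[volume] pcFun c T ⇑f :=
  MemLp.coeFn_toLp (pc_memLp hc hc1 hT f)

lemma pc_inv (hc : Measurable c) (hc1 : ∀ p, ‖c p‖ = 1)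
    (hT : MeasurePreserving T volume volume)
    {c' : ℝ × ℝ → ℂ} (hc' : Measurable c') (hc1' : ∀ p, ‖c' p‖ = 1)
    (hT' : MeasurePreserving (T.symm : ℝ×ℝ → ℝ×ℝ) volume volume)
    (hcc : ∀ p, c p * c' (T p) = 1)
    (f : Lp ℂ 2 (volume : Measure (ℝ × ℝ))) :
    pcL hc' hc1' hT' (pcL hc hc1 hT f) = f := by
  apply Lp.ext
  filter_upwards [pcL_coe hc' hc1' hT' (pcL hc hc1 hT f),
    hT'.quasiMeasurePreserving.ae_eq_comp (pcL_coe hc hc1 hT f)] with p h1 h2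
  simp only [Function.comp] at h2
  rw [h1]
  simp only [pcFun] at h2 ⊢
  rw [h2]
  have := hcc (T.symm p)
  rw [MeasurableEquiv.apply_symm_apply] at this ⊢
  rw [← mul_assoc, mul_comm (c' p), this, one_mul]

lemma isUnitary_pc (hc : Measurable c) (hc1 : ∀ p, ‖c p‖ = 1)
    (hT : MeasurePreserving T volume volume)
    {c' : ℝ × ℝ → ℂ} (hc' : Measurable c') (hc1' : ∀ p, ‖c' p‖ = 1)
    (hcc : ∀ p, c p * c' (T p) = 1)
    {U : (ℝ × ℝ → ℂ) → (ℝ × ℝ → ℂ)} (hU : ∀ f, U f = pcFun c T f) :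
    IsUnitaryOnL2 U := by
  have hT' : MeasurePreserving (T.symm : ℝ×ℝ → ℝ×ℝ) volume volume := hT.symm T
  have hcc' : ∀ p, c' p * c (T.symm p) = 1 := by
    intro p
    have := hcc (T.symm p)
    rw [MeasurableEquiv.apply_symm_apply] at this
    rw [mul_comm]; exact this
  have h1 : (pcL hc hc1 hT).toLinearMap ∘ₗ (pcL hc' hc1' hT').toLinearMap = LinearMap.id := by
    apply LinearMap.ext; intro f
    simp only [LinearMap.coe_comp, Function.comp_apply, LinearIsometry.coe_toLinearMap,
      LinearMap.id_coe, id_eq]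
    apply Lp.ext
    filter_upwards [pcL_coe hc hc1 hT (pcL hc' hc1' hT' f),
      hT.quasiMeasurePreserving.ae_eq_comp (pcL_coe hc' hc1' hT' f)] with p h1 h2
    simp only [Function.comp] at h2
    rw [h1]
    simp only [pcFun] at h2 ⊢
    rw [h2, MeasurableEquiv.symm_apply_apply, ← mul_assoc, hcc p, one_mul]
  have h2 : (pcL hc' hc1' hT').toLinearMap ∘ₗ (pcL hc hc1 hT).toLinearMap = LinearMap.id := by
    apply LinearMap.ext; intro f
    simp only [LinearMap.coe_comp, Function.comp_apply, LinearIsometry.coe_toLinearMap,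
      LinearMap.id_coe, id_eq]
    apply Lp.ext
    filter_upwards [pcL_coe hc' hc1' hT' (pcL hc hc1 hT f),
      hT'.quasiMeasurePreserving.ae_eq_comp (pcL_coe hc hc1 hT f)] with p h1 h2
    simp only [Function.comp] at h2
    rw [h1]
    simp only [pcFun] at h2 ⊢
    rw [h2, MeasurableEquiv.apply_symm_apply, ← mul_assoc, hcc' p, one_mul]
  refine ⟨⟨LinearEquiv.ofLinear (pcL hc hc1 hT).toLinearMap (pcL hc' hc1' hT').toLinearMap h1 h2,
    fun f => (pcL hc hc1 hT).norm_map f⟩, ?_⟩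
  intro f
  rw [hU]
  exact pcL_coe hc hc1 hT f

lemma isUnitary_phase_shift (g : ℝ × ℝ → ℝ) (hg : Continuous g) (v : ℝ × ℝ)
    (hgv : ∀ p : ℝ × ℝ, g (p + v) = g p)
    {U : (ℝ × ℝ → ℂ) → (ℝ × ℝ → ℂ)}
    (hU : ∀ (f : ℝ × ℝ → ℂ) (p : ℝ × ℝ), U f p = Complex.exp (Complex.I * g p) * f (p + v)) :
    IsUnitaryOnL2 U := by
  set T : (ℝ × ℝ) ≃ᵐ (ℝ × ℝ) := MeasurableEquiv.addRight v with hTdef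
  have hTapp : ∀ p, T p = p + v := fun p => rfl
  have hT : MeasurePreserving (⇑T) volume volume := by
    have := measurePreserving_add_right (volume : Measure (ℝ × ℝ)) v
    exact this
  set c : ℝ × ℝ → ℂ := fun p => Complex.exp (Complex.I * g p) with hcdef
  have hc : Measurable c :=
    (Complex.continuous_exp.comp (continuous_const.mul
      (Complex.continuous_ofReal.comp hg))).measurable
  have hc1 : ∀ p, ‖c p‖ = 1 := fun p => by
    simp [hcdef, Complex.norm_exp]
  set c' : ℝ × ℝ → ℂ := fun p => Complex.exp (-(Complex.I * g p)) with hcdef'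
  have hc' : Measurable c' :=
    (Complex.continuous_exp.comp (continuous_const.mul
      (Complex.continuous_ofReal.comp hg)).neg).measurable
  have hc1' : ∀ p, ‖c' p‖ = 1 := fun p => by
    simp [hcdef', Complex.norm_exp]
  have hcc : ∀ p, c p * c' (T p) = 1 := fun p => by
    rw [hcdef, hcdef']
    simp only [hTapp, hgv]
    rw [← Complex.exp_add, add_neg_cancel, Complex.exp_zero]
  exact isUnitary_pc hc hc1 hT hc' hc1' hcc (fun f => funext fun p => by
    rw [hU]; rfl)


theorem stmt0 (hb th B r s : ℝ) (hhb : hb ≠ 0) (hth : th ≠ 0) (hB : B ≠ 0)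
    (hnd : hb - th * B ≠ 0) (hrs : r * th * B ≠ hb) (q1 q2 q3 q4 : ℝ) :
    IsUnitaryOnL2 (U1act hb th B r s q1) ∧ IsUnitaryOnL2 (U2act hb th B r s q2) ∧
    IsUnitaryOnL2 (U3act hb th B r s q3) ∧ IsUnitaryOnL2 (U4act hb th B r s q4) ∧
    (∀ f : ℝ × ℝ → ℂ,
      U1act hb th B r s q1 (U3act hb th B r s q3 f) =
        Complex.exp (Complex.I * q3 * q1 / hb) • U3act hb th B r s q3 (U1act hb th B r s q1 f)) ∧
    (∀ f : ℝ × ℝ → ℂ,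
      U2act hb th B r s q2 (U4act hb th B r s q4 f) =
        Complex.exp (Complex.I * q4 * q2 / hb) • U4act hb th B r s q4 (U2act hb th B r s q2 f)) ∧
    (∀ f : ℝ × ℝ → ℂ,
      U1act hb th B r s q1 (U2act hb th B r s q2 f) =
        Complex.exp (-Complex.I * B * q2 * q1 / hb) • U2act hb th B r s q2 (U1act hb th B r s q1 f)) ∧
    (∀ f : ℝ × ℝ → ℂ,
      U3act hb th B r s q3 (U4act hb th B r s q4 f) =
        Complex.exp (-Complex.I * th * q4 * q3 / hb ^ 2) • U4act hb th B r s q4 (U3act hb th B r s q3 f)) ∧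
    (∀ f : ℝ × ℝ → ℂ,
      U1act hb th B r s q1 (U4act hb th B r s q4 f) = U4act hb th B r s q4 (U1act hb th B r s q1 f)) ∧
    (∀ f : ℝ × ℝ → ℂ,
      U2act hb th B r s q2 (U3act hb th B r s q3 f) = U3act hb th B r s q3 (U2act hb th B r s q2 f)) := by
  have hbC : (hb : ℂ) ≠ 0 := Complex.ofReal_ne_zero.mpr hhb
  have hdC : ((r : ℂ) * th * B - hb) ≠ 0 := by exact_mod_cast sub_ne_zero.mpr hrs
  have hdC' : ((B : ℂ) * r * th - hb) ≠ 0 := by rw [show (B : ℂ) * r * th = r * th * B by ring]; exact hdC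
  refine ⟨?_, ?_, ?_, ?_, ?_, ?_, ?_, ?_, ?_, ?_⟩
  · -- U1 unitary
    apply isUnitary_phase_shift (fun p => -(B * (1 - r) * q1 * p.2 / (r * th * B - hb)))
      (by fun_prop) (((th * B * (r + s - r * s) - hb) / (r * th * B - hb)) * q1, 0)
    · intro p; simp
    · intro f p
      have h2 : (p + (((th * B * (r + s - r * s) - hb) / (r * th * B - hb)) * q1, 0) : ℝ × ℝ)
          = (p.1 + ((th * B * (r + s - r * s) - hb) / (r * th * B - hb)) * q1, p.2) := by
        ext <;> simp
      rw [U1act, h2]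
      congr 1
      push_cast
      ring
  · -- U2 unitary
    apply isUnitary_phase_shift (fun p => -(r * B * q2 * p.1 / hb))
      (by fun_prop) (0, -(((r * th * B * (1 - s) - hb) / hb) * q2))
    · intro p; simp
    · intro f p
      have h2 : (p + (0, -(((r * th * B * (1 - s) - hb) / hb) * q2)) : ℝ × ℝ)
          = (p.1, p.2 - ((r * th * B * (1 - s) - hb) / hb) * q2) := by
        ext <;> simp [sub_eq_add_neg]
      rw [U2act, h2]
      congr 1
      push_cast
      ring
  · -- U3 unitary
    apply isUnitary_phase_shift (fun p => q3 * p.1 / hb)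
      (by fun_prop) (0, -(s * (th / hb) * q3))
    · intro p; simp
    · intro f p
      have h2 : (p + (0, -(s * (th / hb) * q3)) : ℝ × ℝ)
          = (p.1, p.2 - s * (th / hb) * q3) := by
        ext <;> simp [sub_eq_add_neg]
      rw [U3act, h2]
      congr 1
      push_cast
      ring
  · -- U4 unitary
    apply isUnitary_phase_shift (fun p => q4 * p.2 / hb)
      (by fun_prop) ((1 - s) * (th / hb) * q4, 0)
    · intro p; simp
    · intro f p
      have h2 : (p + ((1 - s) * (th / hb) * q4, 0) : ℝ × ℝ)
          = (p.1 + (1 - s) * (th / hb) * q4, p.2) := by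
        ext <;> simp
      rw [U4act, h2]
      congr 1
      push_cast
      ring
  · -- U1 U3
    intro f; funext p
    simp only [U1act, U3act, Pi.smul_apply, smul_eq_mul, ← mul_assoc, ← Complex.exp_add]
    congr 2
    push_cast
    field_simp
    ring
  · -- U2 U4
    intro f; funext p
    simp only [U2act, U4act, Pi.smul_apply, smul_eq_mul, ← mul_assoc, ← Complex.exp_add]
    congr 2
    push_cast
    field_simp
    ring
  · -- U1 U2
    intro f; funext p
    simp only [U1act, U2act, Pi.smul_apply, smul_eq_mul, ← mul_assoc, ← Complex.exp_add]
    congr 2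
    push_cast
    field_simp
    ring
  · -- U3 U4
    intro f; funext p
    simp only [U3act, U4act, Pi.smul_apply, smul_eq_mul, ← mul_assoc, ← Complex.exp_add]
    congr 2
    push_cast
    field_simp
    ring
  · -- U1 U4
    intro f; funext p
    simp only [U1act, U4act, ← mul_assoc, ← Complex.exp_add]
    congr 2
    · push_cast; field_simp; ring
    · simp only [Prod.mk.injEq]; exact ⟨by ring, trivial⟩
  · -- U2 U3
    intro f; funext p
    simp only [U2act, U3act, ← mul_assoc, ← Complex.exp_add]
    congr 2
    · push_cast; field_simp; ring
    · simp only [Prod.mk.injEq]; exact ⟨trivial, by ring⟩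
end
end

section
/- The operators X, Y, Π_x, Π_y map S(ℝ², ℂ) into itself and satisfy the commutation relations, as operator identities on S(ℝ², ℂ): [X, Π_x] = i·ħ₀·Id, [Y, Π_y] = i·ħ₀·Id, [X, Y] = i·θ₀·Id, and [Π_x, Π_y] = i·ħ₀·B₀·Id. -/
set_option maxHeartbeats 1000000


open MeasureTheory Complex
open scoped ENNReal

noncomputable section

/-- `p_x = −i·ħ₀·∂_x`. -/
def pxOp (hb : ℝ) (f : ℝ × ℝ → ℂ) : ℝ × ℝ → ℂ := fun p =>
  -Complex.I * hb * fderiv ℝ f p (1, 0)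

/-- `p_y = −i·ħ₀·∂_y`. -/
def pyOp (hb : ℝ) (f : ℝ × ℝ → ℂ) : ℝ × ℝ → ℂ := fun p =>
  -Complex.I * hb * fderiv ℝ f p (0, 1)

/-- `X = x − s·(θ₀/ħ₀)·p_y`. -/
def Xop (hb th s : ℝ) (f : ℝ × ℝ → ℂ) : ℝ × ℝ → ℂ := fun p =>
  p.1 * f p - s * (th / hb) * pyOp hb f p

/-- `Y = y + (1−s)·(θ₀/ħ₀)·p_x`. -/
def Yop (hb th s : ℝ) (f : ℝ × ℝ → ℂ) : ℝ × ℝ → ℂ := fun p =>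
  p.2 * f p + (1 - s) * (th / hb) * pxOp hb f p

/-- `Π_x = ((1−r)ħ₀B₀/(ħ₀−rθ₀B₀))·y + (((r+s−rs)θ₀B₀−ħ₀)/(rθ₀B₀−ħ₀))·p_x`. -/
def PixOp (hb th B r s : ℝ) (f : ℝ × ℝ → ℂ) : ℝ × ℝ → ℂ := fun p =>
  ((1 - r) * hb * B / (hb - r * th * B)) * p.2 * f p +
    (((r + s - r * s) * th * B - hb) / (r * th * B - hb)) * pxOp hb f p

/-- `Π_y = −rB₀·x + (1 + r(s−1)θ₀B₀/ħ₀)·p_y`. -/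
def PiyOp (hb th B r s : ℝ) (f : ℝ × ℝ → ℂ) : ℝ × ℝ → ℂ := fun p =>
  -(r * B) * p.1 * f p + (1 + r * (s - 1) * th * B / hb) * pyOp hb f p

namespace Stmt10Aux

open scoped ContDiff

abbrev Dv (v : ℝ × ℝ) (g : ℝ × ℝ → ℂ) : ℝ × ℝ → ℂ := fun q => fderiv ℝ g q v

lemma diffAt {F : Type*} [NormedAddCommGroup F] [NormedSpace ℝ F] {g : ℝ × ℝ → F}
    (hg : ContDiff ℝ ∞ g) (p : ℝ × ℝ) :
    DifferentiableAt ℝ g p := (hg.differentiable (by simp)).differentiableAt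

lemma contDiff_Dv {g : ℝ × ℝ → ℂ} (hg : ContDiff ℝ ∞ g) (v : ℝ × ℝ) :
    ContDiff ℝ ∞ (Dv v g) :=
  (ContinuousLinearMap.apply ℝ ℂ v).contDiff.comp (hg.fderiv_right (by exact_mod_cast le_top))

lemma contDiff_fst_mul {g : ℝ × ℝ → ℂ} (hg : ContDiff ℝ ∞ g) :
    ContDiff ℝ ∞ (fun q : ℝ × ℝ => (q.1 : ℂ) * g q) :=
  ((Complex.ofRealCLM.comp (ContinuousLinearMap.fst ℝ ℝ ℝ)).contDiff).mul hg

lemma contDiff_snd_mul {g : ℝ × ℝ → ℂ} (hg : ContDiff ℝ ∞ g) :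
    ContDiff ℝ ∞ (fun q : ℝ × ℝ => (q.2 : ℂ) * g q) :=
  ((Complex.ofRealCLM.comp (ContinuousLinearMap.snd ℝ ℝ ℝ)).contDiff).mul hg

lemma fderiv_cmul {g : ℝ × ℝ → ℂ} (hg : ContDiff ℝ ∞ g) (c : ℂ) (p v : ℝ × ℝ) :
    fderiv ℝ (fun q => c * g q) p v = c * fderiv ℝ g p v := by
  rw [fderiv_const_mul (diffAt hg p) c]; rfl

lemma fderiv_fst_mul {g : ℝ × ℝ → ℂ} (hg : ContDiff ℝ ∞ g) (p v : ℝ × ℝ) :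
    fderiv ℝ (fun q => (q.1 : ℂ) * g q) p v = v.1 * g p + p.1 * fderiv ℝ g p v := by
  have e : (fun q : ℝ × ℝ => (q.1 : ℂ)) = ⇑(Complex.ofRealCLM.comp (ContinuousLinearMap.fst ℝ ℝ ℝ)) := rfl
  have h1 : DifferentiableAt ℝ (fun q : ℝ × ℝ => (q.1 : ℂ)) p := by
    rw [e]; exact (Complex.ofRealCLM.comp (ContinuousLinearMap.fst ℝ ℝ ℝ)).differentiableAt
  rw [fderiv_fun_mul h1 (diffAt hg p)]
  have h2 : fderiv ℝ (fun q : ℝ × ℝ => (q.1 : ℂ)) p = Complex.ofRealCLM.comp (ContinuousLinearMap.fst ℝ ℝ ℝ) := by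
    rw [e]; exact ContinuousLinearMap.fderiv _
  simp only [h2, ContinuousLinearMap.add_apply, ContinuousLinearMap.coe_smul',
    Pi.smul_apply, smul_eq_mul, ContinuousLinearMap.coe_comp', Function.comp_apply,
    ContinuousLinearMap.coe_fst', Complex.ofRealCLM_apply]
  ring

lemma fderiv_snd_mul {g : ℝ × ℝ → ℂ} (hg : ContDiff ℝ ∞ g) (p v : ℝ × ℝ) :
    fderiv ℝ (fun q => (q.2 : ℂ) * g q) p v = v.2 * g p + p.2 * fderiv ℝ g p v := by
  have e : (fun q : ℝ × ℝ => (q.2 : ℂ)) = ⇑(Complex.ofRealCLM.comp (ContinuousLinearMap.snd ℝ ℝ ℝ)) := rfl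
  have h1 : DifferentiableAt ℝ (fun q : ℝ × ℝ => (q.2 : ℂ)) p := by
    rw [e]; exact (Complex.ofRealCLM.comp (ContinuousLinearMap.snd ℝ ℝ ℝ)).differentiableAt
  rw [fderiv_fun_mul h1 (diffAt hg p)]
  have h2 : fderiv ℝ (fun q : ℝ × ℝ => (q.2 : ℂ)) p = Complex.ofRealCLM.comp (ContinuousLinearMap.snd ℝ ℝ ℝ) := by
    rw [e]; exact ContinuousLinearMap.fderiv _
  simp only [h2, ContinuousLinearMap.add_apply, ContinuousLinearMap.coe_smul',
    Pi.smul_apply, smul_eq_mul, ContinuousLinearMap.coe_comp', Function.comp_apply,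
    ContinuousLinearMap.coe_snd', Complex.ofRealCLM_apply]
  ring

lemma clairaut {g : ℝ × ℝ → ℂ} (hg : ContDiff ℝ ∞ g) (p v w : ℝ × ℝ) :
    fderiv ℝ (Dv v g) p w = fderiv ℝ (Dv w g) p v := by
  have hd : ContDiff ℝ ∞ (fderiv ℝ g) := hg.fderiv_right (by exact_mod_cast le_top)
  have key : ∀ u u' : ℝ × ℝ, fderiv ℝ (Dv u g) p u' = fderiv ℝ (fderiv ℝ g) p u' u := by
    intro u u'
    have hcomp : fderiv ℝ (fun q => (ContinuousLinearMap.apply ℝ ℂ u) (fderiv ℝ g q)) p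
        = (ContinuousLinearMap.apply ℝ ℂ u).comp (fderiv ℝ (fderiv ℝ g) p) := by
      rw [show (fun q => (ContinuousLinearMap.apply ℝ ℂ u) (fderiv ℝ g q))
            = (ContinuousLinearMap.apply ℝ ℂ u) ∘ (fderiv ℝ g) from rfl,
        fderiv_comp p (ContinuousLinearMap.apply ℝ ℂ u).differentiableAt (diffAt hd p),
        ContinuousLinearMap.fderiv]
    have : Dv u g = fun q => (ContinuousLinearMap.apply ℝ ℂ u) (fderiv ℝ g q) := rfl
    rw [this, hcomp]; rfl
  rw [key v w, key w v]
  exact second_derivative_symmetric (fun y => (diffAt hg y).hasFDerivAt)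
    (diffAt hd p).hasFDerivAt w v

/-- shape 1: `a·x·g + c·∂_y g` -/
lemma fderiv_shape1 {g : ℝ × ℝ → ℂ} (hg : ContDiff ℝ ∞ g) (a c : ℂ) (p v : ℝ × ℝ) :
    fderiv ℝ (fun q => a * ((q.1 : ℂ) * g q) + c * Dv (0, 1) g q) p v =
      a * (v.1 * g p + p.1 * fderiv ℝ g p v) + c * fderiv ℝ (Dv (0, 1) g) p v := by
  rw [fderiv_fun_add (diffAt (contDiff_const.mul (contDiff_fst_mul hg)) p)
    (diffAt (contDiff_const.mul (contDiff_Dv hg (0, 1))) p)]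
  rw [ContinuousLinearMap.add_apply,
    fderiv_cmul (contDiff_fst_mul hg), fderiv_fst_mul hg,
    fderiv_cmul (contDiff_Dv hg (0, 1))]

/-- shape 2: `b·y·g + c·∂_x g` -/
lemma fderiv_shape2 {g : ℝ × ℝ → ℂ} (hg : ContDiff ℝ ∞ g) (b c : ℂ) (p v : ℝ × ℝ) :
    fderiv ℝ (fun q => b * ((q.2 : ℂ) * g q) + c * Dv (1, 0) g q) p v =
      b * (v.2 * g p + p.2 * fderiv ℝ g p v) + c * fderiv ℝ (Dv (1, 0) g) p v := by
  rw [fderiv_fun_add (diffAt (contDiff_const.mul (contDiff_snd_mul hg)) p)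
    (diffAt (contDiff_const.mul (contDiff_Dv hg (1, 0))) p)]
  rw [ContinuousLinearMap.add_apply,
    fderiv_cmul (contDiff_snd_mul hg), fderiv_snd_mul hg,
    fderiv_cmul (contDiff_Dv hg (1, 0))]

lemma tgrowth_fst : Function.HasTemperateGrowth (fun q : ℝ × ℝ => (q.1 : ℂ)) := by
  have : (fun q : ℝ × ℝ => (q.1 : ℂ))
      = ⇑(Complex.ofRealCLM.comp (ContinuousLinearMap.fst ℝ ℝ ℝ)) := rfl
  rw [this]; exact (Complex.ofRealCLM.comp (ContinuousLinearMap.fst ℝ ℝ ℝ)).hasTemperateGrowth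

lemma tgrowth_snd : Function.HasTemperateGrowth (fun q : ℝ × ℝ => (q.2 : ℂ)) := by
  have : (fun q : ℝ × ℝ => (q.2 : ℂ))
      = ⇑(Complex.ofRealCLM.comp (ContinuousLinearMap.snd ℝ ℝ ℝ)) := rfl
  rw [this]; exact (Complex.ofRealCLM.comp (ContinuousLinearMap.snd ℝ ℝ ℝ)).hasTemperateGrowth

/-- multiplication by `x` on Schwartz space -/
def mulXS : SchwartzMap (ℝ × ℝ) ℂ →L[ℝ] SchwartzMap (ℝ × ℝ) ℂ :=
  SchwartzMap.bilinLeftCLM (ContinuousLinearMap.mul ℝ ℂ) tgrowth_fst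

/-- multiplication by `y` on Schwartz space -/
def mulYS : SchwartzMap (ℝ × ℝ) ℂ →L[ℝ] SchwartzMap (ℝ × ℝ) ℂ :=
  SchwartzMap.bilinLeftCLM (ContinuousLinearMap.mul ℝ ℂ) tgrowth_snd

lemma mulXS_apply (f : SchwartzMap (ℝ × ℝ) ℂ) (x : ℝ × ℝ) :
    mulXS f x = f x * (x.1 : ℂ) := rfl

lemma mulYS_apply (f : SchwartzMap (ℝ × ℝ) ℂ) (x : ℝ × ℝ) :
    mulYS f x = f x * (x.2 : ℂ) := rfl

end Stmt10Aux

open Stmt10Aux in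
theorem stmt10 (hb th B r s : ℝ) (hhb : hb ≠ 0) (hth : th ≠ 0) (hB : B ≠ 0)
    (hnd : hb - th * B ≠ 0) (hrs : r * th * B ≠ hb) :
    -- the operators map `S(ℝ², ℂ)` into itself
    (∀ f : SchwartzMap (ℝ × ℝ) ℂ, ∃ g : SchwartzMap (ℝ × ℝ) ℂ, ⇑g = Xop hb th s ⇑f) ∧
    (∀ f : SchwartzMap (ℝ × ℝ) ℂ, ∃ g : SchwartzMap (ℝ × ℝ) ℂ, ⇑g = Yop hb th s ⇑f) ∧
    (∀ f : SchwartzMap (ℝ × ℝ) ℂ, ∃ g : SchwartzMap (ℝ × ℝ) ℂ, ⇑g = PixOp hb th B r s ⇑f) ∧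
    (∀ f : SchwartzMap (ℝ × ℝ) ℂ, ∃ g : SchwartzMap (ℝ × ℝ) ℂ, ⇑g = PiyOp hb th B r s ⇑f) ∧
    -- `[X, Π_x] = i ħ₀ Id`
    (∀ (f : SchwartzMap (ℝ × ℝ) ℂ) (p : ℝ × ℝ),
      Xop hb th s (PixOp hb th B r s ⇑f) p - PixOp hb th B r s (Xop hb th s ⇑f) p =
        Complex.I * hb * f p) ∧
    -- `[Y, Π_y] = i ħ₀ Id`
    (∀ (f : SchwartzMap (ℝ × ℝ) ℂ) (p : ℝ × ℝ),
      Yop hb th s (PiyOp hb th B r s ⇑f) p - PiyOp hb th B r s (Yop hb th s ⇑f) p =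
        Complex.I * hb * f p) ∧
    -- `[X, Y] = i θ₀ Id`
    (∀ (f : SchwartzMap (ℝ × ℝ) ℂ) (p : ℝ × ℝ),
      Xop hb th s (Yop hb th s ⇑f) p - Yop hb th s (Xop hb th s ⇑f) p =
        Complex.I * th * f p) ∧
    -- `[Π_x, Π_y] = i ħ₀ B₀ Id`
    (∀ (f : SchwartzMap (ℝ × ℝ) ℂ) (p : ℝ × ℝ),
      PixOp hb th B r s (PiyOp hb th B r s ⇑f) p - PiyOp hb th B r s (PixOp hb th B r s ⇑f) p =
        Complex.I * hb * B * f p) := by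
  have hhb' : (hb : ℂ) ≠ 0 := Complex.ofReal_ne_zero.mpr hhb
  have hd1 : ((hb : ℂ) - r * th * B) ≠ 0 := by
    rw [sub_ne_zero]
    intro h
    exact hrs (by exact_mod_cast h.symm)
  have hd2 : ((r : ℂ) * th * B - hb) ≠ 0 := by
    rw [sub_ne_zero]; exact_mod_cast hrs
  refine ⟨?_, ?_, ?_, ?_, ?_, ?_, ?_, ?_⟩
  · -- X maps Schwartz to Schwartz
    intro f
    refine ⟨mulXS f + (-(↑s * (↑th / ↑hb) * (-Complex.I * ↑hb))) • LineDeriv.lineDerivOpCLM ℝ (SchwartzMap (ℝ × ℝ) ℂ) ((0 : ℝ), (1 : ℝ)) f, ?_⟩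
    funext q
    simp only [SchwartzMap.add_apply, SchwartzMap.smul_apply, mulXS_apply,
      LineDeriv.lineDerivOpCLM_apply, SchwartzMap.lineDerivOp_apply_eq_fderiv, Xop, pyOp, smul_eq_mul]
    ring
  · -- Y
    intro f
    refine ⟨mulYS f + ((1 - ↑s) * (↑th / ↑hb) * (-Complex.I * ↑hb)) • LineDeriv.lineDerivOpCLM ℝ (SchwartzMap (ℝ × ℝ) ℂ) ((1 : ℝ), (0 : ℝ)) f, ?_⟩
    funext q
    simp only [SchwartzMap.add_apply, SchwartzMap.smul_apply, mulYS_apply,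
      LineDeriv.lineDerivOpCLM_apply, SchwartzMap.lineDerivOp_apply_eq_fderiv, Yop, pxOp, smul_eq_mul]
    ring
  · -- Πx
    intro f
    refine ⟨((1 - (r : ℂ)) * ↑hb * ↑B / (↑hb - ↑r * ↑th * ↑B)) • mulYS f +
      ((((r : ℂ) + ↑s - ↑r * ↑s) * ↑th * ↑B - ↑hb) / (↑r * ↑th * ↑B - ↑hb) * (-Complex.I * ↑hb)) •
        LineDeriv.lineDerivOpCLM ℝ (SchwartzMap (ℝ × ℝ) ℂ) ((1 : ℝ), (0 : ℝ)) f, ?_⟩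
    funext q
    simp only [SchwartzMap.add_apply, SchwartzMap.smul_apply, mulYS_apply,
      LineDeriv.lineDerivOpCLM_apply, SchwartzMap.lineDerivOp_apply_eq_fderiv, PixOp, pxOp, smul_eq_mul]
    ring
  · -- Πy
    intro f
    refine ⟨(-((r : ℂ) * ↑B)) • mulXS f +
      ((1 + (r : ℂ) * (↑s - 1) * ↑th * ↑B / ↑hb) * (-Complex.I * ↑hb)) •
        LineDeriv.lineDerivOpCLM ℝ (SchwartzMap (ℝ × ℝ) ℂ) ((0 : ℝ), (1 : ℝ)) f, ?_⟩
    funext q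
    simp only [SchwartzMap.add_apply, SchwartzMap.smul_apply, mulXS_apply,
      LineDeriv.lineDerivOpCLM_apply, SchwartzMap.lineDerivOp_apply_eq_fderiv, PiyOp, pyOp, smul_eq_mul]
    ring
  · -- [X, Πx]
    intro f p
    have hf : ContDiff ℝ (((⊤ : ℕ∞) : WithTop ℕ∞)) ⇑f := f.smooth ⊤
    have eX : Xop hb th s ⇑f = fun q =>
        (1 : ℂ) * ((q.1 : ℂ) * f q) + (-(↑s * (↑th / ↑hb) * (-Complex.I * ↑hb))) * Dv (0, 1) (⇑f) q := by
      funext q; simp only [Xop, pyOp, Dv]; ring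
    have hcoef : (((r : ℂ) + ↑s - ↑r * ↑s) * ↑th * ↑B - ↑hb) / (↑r * ↑th * ↑B - ↑hb)
        = (↑hb - ((r : ℂ) + ↑s - ↑r * ↑s) * ↑th * ↑B) / (↑hb - ↑r * ↑th * ↑B) := by
      rw [← neg_div_neg_eq]; ring_nf
    have ePix : PixOp hb th B r s ⇑f = fun q =>
        ((1 - (r : ℂ)) * ↑hb * ↑B / (↑hb - ↑r * ↑th * ↑B)) * ((q.2 : ℂ) * f q) +
          ((↑hb - ((r : ℂ) + ↑s - ↑r * ↑s) * ↑th * ↑B) / (↑hb - ↑r * ↑th * ↑B) * (-Complex.I * ↑hb)) *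
            Dv (1, 0) (⇑f) q := by
      funext q; simp only [PixOp, pxOp, Dv]; rw [hcoef]; ring
    simp only [Xop, PixOp, pxOp, pyOp]
    rw [eX, ePix, fderiv_shape1 hf, fderiv_shape2 hf, clairaut hf p (1, 0) (0, 1)]
    norm_num
    rw [hcoef]
    have hd3 : (-((r : ℂ) * ↑B * ↑th) + ↑hb) ≠ 0 := by
      intro h; apply hd1; linear_combination h
    field_simp [hhb', hd1, hd2, hd3]
    ring_nf
    field_simp [hd3]
  · -- [Y, Πy]
    intro f p
    have hf : ContDiff ℝ (((⊤ : ℕ∞) : WithTop ℕ∞)) ⇑f := f.smooth ⊤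
    have eY : Yop hb th s ⇑f = fun q =>
        (1 : ℂ) * ((q.2 : ℂ) * f q) + ((1 - ↑s) * (↑th / ↑hb) * (-Complex.I * ↑hb)) * Dv (1, 0) (⇑f) q := by
      funext q; simp only [Yop, pxOp, Dv]; ring
    have ePiy : PiyOp hb th B r s ⇑f = fun q =>
        (-((r : ℂ) * ↑B)) * ((q.1 : ℂ) * f q) +
          ((1 + (r : ℂ) * (↑s - 1) * ↑th * ↑B / ↑hb) * (-Complex.I * ↑hb)) * Dv (0, 1) (⇑f) q := by
      funext q; simp only [PiyOp, pyOp, Dv]; ring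
    simp only [Yop, PiyOp, pxOp, pyOp]
    rw [eY, ePiy, fderiv_shape1 hf, fderiv_shape2 hf, clairaut hf p (1, 0) (0, 1)]
    norm_num
    field_simp [hhb', hd1, hd2]
    ring
  · -- [X, Y]
    intro f p
    have hf : ContDiff ℝ (((⊤ : ℕ∞) : WithTop ℕ∞)) ⇑f := f.smooth ⊤
    have eX : Xop hb th s ⇑f = fun q =>
        (1 : ℂ) * ((q.1 : ℂ) * f q) + (-(↑s * (↑th / ↑hb) * (-Complex.I * ↑hb))) * Dv (0, 1) (⇑f) q := by
      funext q; simp only [Xop, pyOp, Dv]; ring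
    have eY : Yop hb th s ⇑f = fun q =>
        (1 : ℂ) * ((q.2 : ℂ) * f q) + ((1 - ↑s) * (↑th / ↑hb) * (-Complex.I * ↑hb)) * Dv (1, 0) (⇑f) q := by
      funext q; simp only [Yop, pxOp, Dv]; ring
    simp only [Xop, Yop, pxOp, pyOp]
    rw [eX, eY, fderiv_shape1 hf, fderiv_shape2 hf, clairaut hf p (1, 0) (0, 1)]
    norm_num
    field_simp [hhb', hd1, hd2]
    ring
  · -- [Πx, Πy]
    intro f p
    have hf : ContDiff ℝ (((⊤ : ℕ∞) : WithTop ℕ∞)) ⇑f := f.smooth ⊤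
    have hcoef : (((r : ℂ) + ↑s - ↑r * ↑s) * ↑th * ↑B - ↑hb) / (↑r * ↑th * ↑B - ↑hb)
        = (↑hb - ((r : ℂ) + ↑s - ↑r * ↑s) * ↑th * ↑B) / (↑hb - ↑r * ↑th * ↑B) := by
      rw [← neg_div_neg_eq]; ring_nf
    have ePix : PixOp hb th B r s ⇑f = fun q =>
        ((1 - (r : ℂ)) * ↑hb * ↑B / (↑hb - ↑r * ↑th * ↑B)) * ((q.2 : ℂ) * f q) +
          ((↑hb - ((r : ℂ) + ↑s - ↑r * ↑s) * ↑th * ↑B) / (↑hb - ↑r * ↑th * ↑B) * (-Complex.I * ↑hb)) *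
            Dv (1, 0) (⇑f) q := by
      funext q; simp only [PixOp, pxOp, Dv]; rw [hcoef]; ring
    have ePiy : PiyOp hb th B r s ⇑f = fun q =>
        (-((r : ℂ) * ↑B)) * ((q.1 : ℂ) * f q) +
          ((1 + (r : ℂ) * (↑s - 1) * ↑th * ↑B / ↑hb) * (-Complex.I * ↑hb)) * Dv (0, 1) (⇑f) q := by
      funext q; simp only [PiyOp, pyOp, Dv]; ring
    simp only [PixOp, PiyOp, pxOp, pyOp]
    rw [ePix, ePiy, fderiv_shape1 hf, fderiv_shape2 hf, clairaut hf p (1, 0) (0, 1)]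
    norm_num
    rw [hcoef]
    have hd3 : (-((r : ℂ) * ↑B * ↑th) + ↑hb) ≠ 0 := by
      intro h; apply hd1; linear_combination h
    field_simp [hhb', hd1, hd2, hd3]
    ring_nf
    field_simp [hd3]
end
end
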